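/- Let G be a locally compact Hausdorff group and let z ∈ G^* be right cancellable in G^{luc}. If (n_i) is a norm-bounded net in LUC(G)^* and n_i·z → n·z in the weak-star topology of LUC(G)^*, then n_i → n in the weak-star topology of LUC(G)^*. -/

import Mathlib

open scoped BoundedContinuousFunction
open Filter Topology

set_option synthInstance.maxHeartbeats 1000000
set_option maxHeartbeats 1000000

namespace LucPaper

variable {G : Type*} [Group G] [TopologicalSpace G] [IsTopologicalGroup G]

/-- Left translation of a bounded continuous function: `lTrans g f x = f (g * x)`. -/
noncomputable def lTrans (g : G) (f : G →ᵇ ℂ) : G →ᵇ ℂ :=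
  f.compContinuous ⟨fun x => g * x, continuous_const.mul continuous_id⟩

@[simp] lemma lTrans_apply (g : G) (f : G →ᵇ ℂ) (x : G) : lTrans g f x = f (g * x) := rfl

lemma lTrans_mul (g : G) (f h : G →ᵇ ℂ) : lTrans g (f * h) = lTrans g f * lTrans g h := by
  ext x; simp [lTrans]

lemma lTrans_add (g : G) (f h : G →ᵇ ℂ) : lTrans g (f + h) = lTrans g f + lTrans g h := by
  ext x; simp [lTrans]

lemma lTrans_smul (g : G) (c : ℂ) (f : G →ᵇ ℂ) : lTrans g (c • f) = c • lTrans g f := by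
  ext x; simp [lTrans]

lemma lTrans_sub (g : G) (f h : G →ᵇ ℂ) : lTrans g (f - h) = lTrans g f - lTrans g h := by
  ext x; simp [lTrans]

lemma lTrans_lTrans (x g : G) (f : G →ᵇ ℂ) : lTrans x (lTrans g f) = lTrans (g * x) f := by
  ext y; simp [mul_assoc]

lemma norm_lTrans_le (g : G) (f : G →ᵇ ℂ) : ‖lTrans g f‖ ≤ ‖f‖ :=
  f.norm_compContinuous_le _

lemma lTrans_algebraMap (g : G) (c : ℂ) :
    lTrans g (algebraMap ℂ (G →ᵇ ℂ) c) = algebraMap ℂ (G →ᵇ ℂ) c := by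
  ext x; simp [lTrans]

lemma algebraMap_mem_luc (c : ℂ) :
    Continuous fun g : G => lTrans g (algebraMap ℂ (G →ᵇ ℂ) c) := by
  have e : (fun g : G => lTrans g (algebraMap ℂ (G →ᵇ ℂ) c)) =
      fun _ : G => algebraMap ℂ (G →ᵇ ℂ) c :=
    funext fun g => lTrans_algebraMap g c
  rw [e]
  exact continuous_const

/-- The `C*`-algebra `LUC(G)` of bounded left uniformly continuous complex functions on `G`,
realized as a subalgebra of the bounded continuous functions. -/
noncomputable def LUC (G : Type*) [Group G] [TopologicalSpace G] [IsTopologicalGroup G] :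
    Subalgebra ℂ (G →ᵇ ℂ) where
  carrier := {f | Continuous fun g : G => lTrans g f}
  mul_mem' {f h} hf hh := by
    have hf' : Continuous fun g : G => lTrans g f := hf
    have hh' : Continuous fun g : G => lTrans g h := hh
    have e : (fun g : G => lTrans g (f * h)) = fun g => lTrans g f * lTrans g h :=
      funext fun g => lTrans_mul g f h
    show Continuous fun g : G => lTrans g (f * h)
    rw [e]
    exact hf'.mul hh'
  add_mem' {f h} hf hh := by
    have hf' : Continuous fun g : G => lTrans g f := hf
    have hh' : Continuous fun g : G => lTrans g h := hh
    have e : (fun g : G => lTrans g (f + h)) = fun g => lTrans g f + lTrans g h :=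
      funext fun g => lTrans_add g f h
    show Continuous fun g : G => lTrans g (f + h)
    rw [e]
    exact hf'.add hh'
  algebraMap_mem' c := algebraMap_mem_luc c


section Instances
set_option synthInstance.maxHeartbeats 1000000 in
noncomputable instance instLUCNormedAddCommGroup (G : Type*) [Group G] [TopologicalSpace G]
    [IsTopologicalGroup G] : NormedAddCommGroup (LUC G) := inferInstance

set_option synthInstance.maxHeartbeats 1000000 in
noncomputable instance instLUCNormedSpace (G : Type*) [Group G] [TopologicalSpace G]
    [IsTopologicalGroup G] : NormedSpace ℂ (LUC G) := inferInstance

set_option synthInstance.maxHeartbeats 1000000 in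
noncomputable instance instLUCNormedRing (G : Type*) [Group G] [TopologicalSpace G]
    [IsTopologicalGroup G] : NormedRing (LUC G) := inferInstance
end Instances

/-- `LUC(G)^*`, the dual Banach space of `LUC(G)`. -/
noncomputable abbrev Ld (G : Type*) [Group G] [TopologicalSpace G] [IsTopologicalGroup G] :=
  StrongDual ℂ (LUC G)

/-- Left translation as a map `LUC G → LUC G`. -/
noncomputable def lTransL (g : G) (f : LUC G) : LUC G :=
  ⟨lTrans g (f : G →ᵇ ℂ), by
    have hf : Continuous fun h : G => lTrans h (f : G →ᵇ ℂ) := f.2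
    have e : (fun h : G => lTrans h (lTrans g (f : G →ᵇ ℂ))) =
        (fun k : G => lTrans k (f : G →ᵇ ℂ)) ∘ fun h : G => g * h := by
      funext h
      exact lTrans_lTrans h g (f : G →ᵇ ℂ)
    show Continuous fun h : G => lTrans h (lTrans g (f : G →ᵇ ℂ))
    rw [e]
    exact hf.comp (continuous_const.mul continuous_id)⟩

@[simp] lemma lTransL_coe (g : G) (f : LUC G) :
    (lTransL g f : G →ᵇ ℂ) = lTrans g (f : G →ᵇ ℂ) := rfl

lemma continuous_lTransL (f : LUC G) : Continuous fun g : G => lTransL g f :=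
  Continuous.subtype_mk f.2 _

lemma norm_lTransL_le (g : G) (f : LUC G) : ‖lTransL g f‖ ≤ ‖f‖ :=
  norm_lTrans_le g (f : G →ᵇ ℂ)

lemma lTransL_add (g : G) (f h : LUC G) : lTransL g (f + h) = lTransL g f + lTransL g h :=
  Subtype.ext (lTrans_add g _ _)

lemma lTransL_smul (g : G) (c : ℂ) (f : LUC G) : lTransL g (c • f) = c • lTransL g f :=
  Subtype.ext (lTrans_smul g c _)

lemma lTransL_sub (g : G) (f h : LUC G) : lTransL g (f - h) = lTransL g f - lTransL g h :=
  Subtype.ext (lTrans_sub g _ _)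

lemma lTransL_mul (g : G) (f h : LUC G) : lTransL g (f * h) = lTransL g f * lTransL g h :=
  Subtype.ext (lTrans_mul g _ _)

lemma lTransL_lTransL (x g : G) (f : LUC G) : lTransL x (lTransL g f) = lTransL (g * x) f :=
  Subtype.ext (lTrans_lTrans x g _)

end LucPaper

namespace LucPaper
variable {G : Type*} [Group G] [TopologicalSpace G] [IsTopologicalGroup G]

/-- The function `n f : g ↦ ⟨n, l_g f⟩` as a bounded continuous function. -/
noncomputable def arensBCF (n : Ld G) (f : LUC G) : G →ᵇ ℂ :=
  BoundedContinuousFunction.ofNormedAddCommGroup (fun g : G => n (lTransL g f))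
    (n.continuous.comp (continuous_lTransL f)) (‖n‖ * ‖f‖)
    (fun g => le_trans (n.le_opNorm _)
      (mul_le_mul_of_nonneg_left (norm_lTransL_le g f) (norm_nonneg n)))

@[simp] lemma arensBCF_apply (n : Ld G) (f : LUC G) (g : G) :
    arensBCF n f g = n (lTransL g f) := rfl

lemma norm_arensBCF_le (n : Ld G) (f : LUC G) : ‖arensBCF n f‖ ≤ ‖n‖ * ‖f‖ :=
  BoundedContinuousFunction.norm_ofNormedAddCommGroup_le _
    (mul_nonneg (norm_nonneg n) (norm_nonneg f)) _

lemma arensBCF_sub (n : Ld G) (f h : LUC G) :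
    arensBCF n (f - h) = arensBCF n f - arensBCF n h := by
  ext g
  simp [lTransL_sub]

lemma arensBCF_add (n : Ld G) (f h : LUC G) :
    arensBCF n (f + h) = arensBCF n f + arensBCF n h := by
  ext g
  simp [lTransL_add]

lemma arensBCF_smul (n : Ld G) (c : ℂ) (f : LUC G) :
    arensBCF n (c • f) = c • arensBCF n f := by
  ext g
  simp [lTransL_smul]

lemma lipschitz_arensBCF (n : Ld G) :
    LipschitzWith ‖n‖₊ fun f : LUC G => arensBCF n f := by
  apply LipschitzWith.of_dist_le_mul
  intro f h
  rw [dist_eq_norm, dist_eq_norm, ← arensBCF_sub]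
  have : ‖f - h‖ = ‖(f - h : LUC G)‖ := rfl
  calc ‖arensBCF n (f - h)‖ ≤ ‖n‖ * ‖f - h‖ := norm_arensBCF_le n (f - h)
    _ = ‖n‖₊ * ‖f - h‖ := rfl

lemma lTrans_arensBCF (n : Ld G) (f : LUC G) (g : G) :
    lTrans g (arensBCF n f) = arensBCF n (lTransL g f) := by
  ext x
  simp only [lTrans_apply, arensBCF_apply]
  rw [lTransL_lTransL]

/-- The element `n f` of `LUC(G)`. -/
noncomputable def arensFn (n : Ld G) (f : LUC G) : LUC G :=
  ⟨arensBCF n f, by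
    have e : (fun g : G => lTrans g (arensBCF n f)) =
        (fun h : LUC G => arensBCF n h) ∘ fun g : G => lTransL g f :=
      funext fun g => lTrans_arensBCF n f g
    show Continuous fun g : G => lTrans g (arensBCF n f)
    rw [e]
    exact (lipschitz_arensBCF n).continuous.comp (continuous_lTransL f)⟩

@[simp] lemma arensFn_coe (n : Ld G) (f : LUC G) : (arensFn n f : G →ᵇ ℂ) = arensBCF n f := rfl

lemma norm_arensFn_le (n : Ld G) (f : LUC G) : ‖arensFn n f‖ ≤ ‖n‖ * ‖f‖ :=
  norm_arensBCF_le n f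

/-- The Arens-type product on `LUC(G)^*`: `⟨m · n, f⟩ = ⟨m, n f⟩`. -/
noncomputable def arens (m n : Ld G) : Ld G :=
  LinearMap.mkContinuous
    { toFun := fun f : LUC G => m (arensFn n f)
      map_add' := fun f h => by
        show m (arensFn n (f + h)) = m (arensFn n f) + m (arensFn n h)
        rw [show arensFn n (f + h) = arensFn n f + arensFn n h from
          Subtype.ext (arensBCF_add n f h), map_add]
      map_smul' := fun c f => by
        show m (arensFn n (c • f)) = c • m (arensFn n f)
        rw [show arensFn n (c • f) = c • arensFn n f from
          Subtype.ext (arensBCF_smul n c f), map_smul] }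
    (‖m‖ * ‖n‖)
    (fun f => by
      calc ‖m (arensFn n f)‖ ≤ ‖m‖ * ‖arensFn n f‖ := m.le_opNorm _
        _ ≤ ‖m‖ * (‖n‖ * ‖f‖) :=
            mul_le_mul_of_nonneg_left (norm_arensFn_le n f) (norm_nonneg m)
        _ = ‖m‖ * ‖n‖ * ‖f‖ := by ring)

@[simp] lemma arens_apply (m n : Ld G) (f : LUC G) : arens m n f = m (arensFn n f) := rfl

end LucPaper
namespace LucPaper
variable {G : Type*} [Group G] [TopologicalSpace G] [IsTopologicalGroup G]

/-- Evaluation at a point of `G`, as an element of `LUC(G)^*`. -/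
noncomputable def evalChar (g : G) : Ld G :=
  LinearMap.mkContinuous
    { toFun := fun f : LUC G => (f : G →ᵇ ℂ) g
      map_add' := fun f h => rfl
      map_smul' := fun c f => rfl }
    1 (fun f => by rw [one_mul]; exact (f : G →ᵇ ℂ).norm_coe_le_norm g)

@[simp] lemma evalChar_apply (g : G) (f : LUC G) : evalChar g f = (f : G →ᵇ ℂ) g := rfl

variable (G) in
/-- The `LUC`-compactification `G^{luc}` realized as the set of nonzero multiplicative
functionals in `LUC(G)^*`. -/
def gLuc : Set (Ld G) :=
  {m | m ≠ 0 ∧ ∀ f h : LUC G, m (f * h) = m f * m h}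

variable (G) in
/-- The corona `G^* = G^{luc} \ G` in `LUC(G)^*`. -/
def gStar : Set (Ld G) :=
  gLuc G \ Set.range (evalChar (G := G))

lemma evalChar_mem_gLuc (g : G) : evalChar g ∈ gLuc G := by
  constructor
  · intro h0
    have h1 : evalChar g (1 : LUC G) = 0 := by rw [h0]; rfl
    have h2 : evalChar g (1 : LUC G) = 1 := rfl
    rw [h2] at h1
    exact one_ne_zero h1
  · intro f h
    have : ((f * h : LUC G) : G →ᵇ ℂ) = (f : G →ᵇ ℂ) * (h : G →ᵇ ℂ) := rfl
    simp [this]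

end LucPaper
namespace LucPaper
variable {G : Type*} [Group G] [TopologicalSpace G] [IsTopologicalGroup G]

/-- Membership in `C_0(G)`: vanishing at infinity. -/
def IsC0 (f : G →ᵇ ℂ) : Prop := Tendsto (f : G → ℂ) (cocompact G) (𝓝 0)

variable (G) in
/-- The annihilator `C_0(G)^⊥` of `C_0(G)` in `LUC(G)^*`. -/
noncomputable def C0perp : Submodule ℂ (Ld G) where
  carrier := {m | ∀ f : LUC G, IsC0 (f : G →ᵇ ℂ) → m f = 0}
  add_mem' {m n} hm hn := fun f hf => by
    simp [hm f hf, hn f hf]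
  zero_mem' := fun f _ => rfl
  smul_mem' c m hm := fun f hf => by
    simp [hm f hf]

lemma isC0_lTrans {f : G →ᵇ ℂ} (hf : IsC0 f) (g : G) : IsC0 (lTrans g f) := by
  have h1 : Tendsto (⇑(Homeomorph.mulLeft g)) (cocompact G) (cocompact G) :=
    tendsto_map.mono_right (le_of_eq ((Homeomorph.mulLeft g).map_cocompact))
  have h1' : Tendsto (fun x : G => g * x) (cocompact G) (cocompact G) := h1
  exact hf.comp h1'

lemma isC0_rTransBCF {f : G →ᵇ ℂ} (hf : IsC0 f) (x : G) :
    IsC0 (f.compContinuous ⟨fun g : G => g * x, continuous_id.mul continuous_const⟩) := by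
  have h1 : Tendsto (⇑(Homeomorph.mulRight x)) (cocompact G) (cocompact G) :=
    tendsto_map.mono_right (le_of_eq ((Homeomorph.mulRight x).map_cocompact))
  have h1' : Tendsto (fun g : G => g * x) (cocompact G) (cocompact G) := h1
  exact hf.comp h1'

/-- `C_0(G)^⊥` is a left ideal for the Arens product: if `n ∈ C_0(G)^⊥` then `m · n ∈ C_0(G)^⊥`
for every `m`. -/
lemma arens_mem_C0perp_left (m : Ld G) {n : Ld G} (hn : n ∈ C0perp G) :
    arens m n ∈ C0perp G := by
  intro f hf
  have hz : arensFn n f = 0 := by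
    apply Subtype.ext
    ext g
    exact hn (lTransL g f) (isC0_lTrans hf g)
  rw [arens_apply, hz, map_zero]

/-- Multiplying an element of `C_0(G)^⊥` by a point evaluation on the right stays in
`C_0(G)^⊥`. -/
lemma arens_evalChar_mem_C0perp {m : Ld G} (hm : m ∈ C0perp G) (x : G) :
    arens m (evalChar x) ∈ C0perp G := by
  intro f hf
  rw [arens_apply]
  apply hm
  show IsC0 (arensBCF (evalChar x) f)
  have e : (arensBCF (evalChar x) f : G → ℂ) =
      ((f : G →ᵇ ℂ).compContinuous ⟨fun g : G => g * x, continuous_id.mul continuous_const⟩ :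
        G → ℂ) := by
    funext g
    rfl
  show Tendsto (arensBCF (evalChar x) f : G → ℂ) (cocompact G) (𝓝 0)
  rw [e]
  exact isC0_rTransBCF hf x

/-- The multiplication on `C_0(G)^⊥` induced by the Arens product. -/
noncomputable instance : Mul (C0perp G) :=
  ⟨fun m n => ⟨arens m.1 n.1, arens_mem_C0perp_left m.1 n.2⟩⟩

@[simp] lemma C0perp_mul_coe (m n : C0perp G) : ((m * n : C0perp G) : Ld G) = arens m.1 n.1 := rfl

end LucPaper
namespace LucPaper
variable {G : Type*} [Group G] [TopologicalSpace G] [IsTopologicalGroup G]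

section WeakStar

variable {H : Type*} [Group H] [TopologicalSpace H] [IsTopologicalGroup H]

/-- Weak-star continuity for a map `C_0(G)^⊥ → C_0(H)^⊥`, phrased via filters:
whenever a filter converges pointwise (weak-star) to `m`, the images converge pointwise
(weak-star) to the image of `m`. -/
def WStarContinuousC0 (T : C0perp G → C0perp H) : Prop :=
  ∀ (l : Filter (C0perp G)) (m : C0perp G),
    (∀ f : LUC G, Tendsto (fun n : C0perp G => (n : Ld G) f) l (𝓝 ((m : Ld G) f))) →
    ∀ f : LUC H, Tendsto (fun n : C0perp G => (T n : Ld H) f) l (𝓝 ((T m : Ld H) f))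

/-- Weak-star continuity for a map `LUC(G)^* → LUC(H)^*`, phrased via filters. -/
def WStarContinuousD (T : Ld G → Ld H) : Prop :=
  ∀ (l : Filter (Ld G)) (m : Ld G),
    (∀ f : LUC G, Tendsto (fun n : Ld G => n f) l (𝓝 (m f))) →
    ∀ f : LUC H, Tendsto (fun n : Ld G => T n f) l (𝓝 (T m f))

end WeakStar

section WeakDualSide

/-- `LUC(G)^*` equipped with its weak-star topology. -/
noncomputable abbrev LdW (G : Type*) [Group G] [TopologicalSpace G] [IsTopologicalGroup G] :=
  WeakDual ℂ (LUC G)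

variable (G) in
/-- The `LUC`-compactification `G^{luc}` as a subset of the weak-star dual. -/
def gLucW : Set (LdW G) :=
  {m | m ≠ 0 ∧ ∀ f h : LUC G, m (f * h) = m f * m h}

/-- Evaluation at a point of `G` as an element of the weak-star dual. -/
noncomputable def evalCharW (g : G) : LdW G :=
  StrongDual.toWeakDual (evalChar g)

variable (G) in
/-- The corona `G^* = G^{luc} \ G` inside the weak-star dual. -/
def gStarW : Set (LdW G) :=
  gLucW G \ Set.range (evalCharW (G := G))

/-- The Arens product transported to the weak-star dual. -/
noncomputable def arensW (m n : LdW G) : LdW G :=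
  StrongDual.toWeakDual
    (arens (WeakDual.toStrongDual m) (WeakDual.toStrongDual n))

lemma evalCharW_mem_gLucW (g : G) : evalCharW g ∈ gLucW G := by
  have h := evalChar_mem_gLuc (g := g)
  constructor
  · intro h0
    apply h.1
    have : WeakDual.toStrongDual (evalCharW g) = WeakDual.toStrongDual (0 : LdW G) := by
      rw [h0]
    simpa [evalCharW] using this
  · intro f k
    exact h.2 f k

end WeakDualSide

section FSpace

/-- `X` is an F-space: every bounded continuous real function `f` factors as `f = k·|f|`
with `k` bounded continuous. -/
def IsFSpace (X : Type*) [TopologicalSpace X] : Prop :=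
  ∀ f : X →ᵇ ℝ, ∃ k : X →ᵇ ℝ, ∀ x : X, f x = k x * |f x|

/-- A P-point: every `G_δ` set containing the point is a neighbourhood of the point. -/
def IsPPoint {X : Type*} [TopologicalSpace X] (p : X) : Prop :=
  ∀ s : Set X, p ∈ s → (∃ U : ℕ → Set X, (∀ n, IsOpen (U n)) ∧ s = ⋂ n, U n) → s ∈ 𝓝 p

end FSpace

end LucPaper



namespace LucPaper
variable {G : Type*} [Group G] [TopologicalSpace G] [IsTopologicalGroup G]

lemma isClosed_LUC : IsClosed ((LUC G : Set (G →ᵇ ℂ))) := by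
  apply IsSeqClosed.isClosed
  intro fs f hmem hlim
  show Continuous fun g : G => lTrans g f
  have hu : TendstoUniformly (fun k (g : G) => lTrans g (fs k)) (fun g => lTrans g f) atTop := by
    rw [Metric.tendstoUniformly_iff]
    intro ε hε
    filter_upwards [Metric.tendsto_nhds.mp hlim ε hε] with k hk g
    calc dist (lTrans g f) (lTrans g (fs k)) = ‖lTrans g (f - fs k)‖ := by
          rw [dist_eq_norm, ← lTrans_sub]
      _ ≤ ‖f - fs k‖ := norm_lTrans_le _ _
      _ = dist (fs k) f := by rw [dist_eq_norm']
      _ < ε := hk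
  exact hu.continuous (Filter.Eventually.of_forall fun k => hmem k).frequently

lemma star_mem_LUC {f : G →ᵇ ℂ} (hf : f ∈ LUC G) : star f ∈ LUC G := by
  have hf' : Continuous fun g : G => lTrans g f := hf
  have e : (fun g : G => lTrans g (star f)) = fun g => star (lTrans g f) := by
    funext g; ext x; rfl
  show Continuous fun g : G => lTrans g (star f)
  rw [e]
  exact continuous_star.comp hf'

noncomputable instance instLUCStarRing : StarRing (LUC G) where
  star f := ⟨star (f : G →ᵇ ℂ), star_mem_LUC f.2⟩
  star_involutive f := Subtype.ext (star_star (f : G →ᵇ ℂ))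
  star_mul f h := Subtype.ext (star_mul (f : G →ᵇ ℂ) (h : G →ᵇ ℂ))
  star_add f h := Subtype.ext (star_add (f : G →ᵇ ℂ) (h : G →ᵇ ℂ))

instance instLUCStarModule : StarModule ℂ (LUC G) :=
  ⟨fun c f => Subtype.ext (star_smul c (f : G →ᵇ ℂ))⟩

instance instLUCCStarRing : CStarRing (LUC G) where
  norm_mul_self_le f := CStarRing.norm_star_mul_self (x := (f : G →ᵇ ℂ)) |>.symm.le

instance instLUCCompleteSpace : CompleteSpace (LUC G) := isClosed_LUC.completeSpace_coe

noncomputable instance instLUCNormedCommRing : NormedCommRing (LUC G) :=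
  { instLUCNormedRing G with
    mul_comm := fun f h => Subtype.ext (mul_comm (f : G →ᵇ ℂ) (h : G →ᵇ ℂ)) }

noncomputable instance instLUCCStarAlgebra : CStarAlgebra (LUC G) where

noncomputable instance instLUCCommCStarAlgebra : CommCStarAlgebra (LUC G) where

lemma gLuc_apply_one {m : Ld G} (hm : m ∈ gLuc G) : m 1 = 1 := by
  obtain ⟨h0, hmul⟩ := hm
  have h1 : m 1 = m 1 * m 1 := by
    have := hmul 1 1
    rwa [one_mul] at this
  by_contra hne
  have hz' : m 1 = 0 := by
    have h2 : m 1 * (m 1 - 1) = 0 := by linear_combination -h1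
    rcases mul_eq_zero.mp h2 with h | h
    · exact h
    · exact absurd (sub_eq_zero.mp h) hne
  apply h0
  ext f
  have h3 : m f = m f * m 1 := by
    have := hmul f 1
    rwa [mul_one] at this
  show m f = 0
  rw [h3, hz', mul_zero]

lemma lTransL_one (g : G) : lTransL g (1 : LUC G) = 1 := by
  apply Subtype.ext
  ext x
  rfl

lemma arensFn_one {z : Ld G} (hz : z ∈ gLuc G) : arensFn z (1 : LUC G) = 1 := by
  apply Subtype.ext
  ext g
  show arensBCF z 1 g = (1 : G →ᵇ ℂ) g
  rw [arensBCF_apply, lTransL_one, gLuc_apply_one hz]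
  rfl

lemma arensFn_mul {z : Ld G} (hz : z ∈ gLuc G) (f h : LUC G) :
    arensFn z (f * h) = arensFn z f * arensFn z h := by
  apply Subtype.ext
  ext g
  show arensBCF z (f * h) g = arensBCF z f g * arensBCF z h g
  rw [arensBCF_apply, lTransL_mul, hz.2, arensBCF_apply, arensBCF_apply]

lemma arens_mem_gLuc {m z : Ld G} (hm : m ∈ gLuc G) (hz : z ∈ gLuc G) :
    arens m z ∈ gLuc G := by
  constructor
  · intro h0
    have h1 : arens m z 1 = 0 := by rw [h0]; rfl
    rw [arens_apply, arensFn_one hz, gLuc_apply_one hm] at h1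
    exact one_ne_zero h1
  · intro f h
    rw [arens_apply, arens_apply, arens_apply, arensFn_mul hz, hm.2]

open WeakDual in
lemma char_mem_gLuc (φ : characterSpace ℂ (LUC G)) :
    WeakDual.toStrongDual (φ : WeakDual ℂ (LUC G)) ∈ gLuc G := by
  refine ⟨?_, fun f h => φ.2.2 f h⟩
  intro h0
  apply φ.2.1
  apply WeakDual.toStrongDual.injective
  rw [h0, map_zero]

open WeakDual in
/-- Right translation by `z` on the character space. -/
noncomputable def rhoChar (z : Ld G) (hz : z ∈ gLuc G) (φ : characterSpace ℂ (LUC G)) :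
    characterSpace ℂ (LUC G) := by
  refine ⟨StrongDual.toWeakDual (arens (WeakDual.toStrongDual ↑φ) z), ?_, ?_⟩
  · intro h0
    apply (arens_mem_gLuc (char_mem_gLuc φ) hz).1
    apply StrongDual.toWeakDual.injective
    rw [h0, map_zero]
  · intro f h
    exact (arens_mem_gLuc (char_mem_gLuc φ) hz).2 f h

open WeakDual in
lemma rhoChar_apply (z : Ld G) (hz : z ∈ gLuc G) (φ : characterSpace ℂ (LUC G)) (f : LUC G) :
    rhoChar z hz φ f = φ (arensFn z f) := rfl

open WeakDual in
lemma continuous_rhoChar (z : Ld G) (hz : z ∈ gLuc G) : Continuous (rhoChar z hz) := by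
  apply Continuous.subtype_mk
  apply WeakDual.continuous_of_continuous_eval
  intro f
  exact (WeakDual.eval_continuous (arensFn z f)).comp continuous_subtype_val

open WeakDual in
lemma injective_rhoChar (z : Ld G) (hz : z ∈ gLuc G)
    (hrc : ∀ m n : Ld G, m ∈ gLuc G → n ∈ gLuc G → arens m z = arens n z → m = n) :
    Function.Injective (rhoChar z hz) := by
  intro φ ψ hφψ
  have h1 : arens (WeakDual.toStrongDual ↑φ) z = arens (WeakDual.toStrongDual ↑ψ) z := by
    have := Subtype.ext_iff.mp hφψ
    exact StrongDual.toWeakDual.injective this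
  have h2 := hrc _ _ (char_mem_gLuc φ) (char_mem_gLuc ψ) h1
  apply Subtype.ext
  exact WeakDual.toStrongDual.injective h2

open WeakDual in
lemma arensFn_surjective (z : Ld G) (hz : z ∈ gLuc G)
    (hrc : ∀ m n : Ld G, m ∈ gLuc G → n ∈ gLuc G → arens m z = arens n z → m = n) :
    Function.Surjective (fun f : LUC G => arensFn z f) := by
  intro h
  have hemb : IsClosedEmbedding (rhoChar z hz) :=
    (continuous_rhoChar z hz).isClosedEmbedding (injective_rhoChar z hz hrc)
  obtain ⟨K, hK⟩ := (gelfandTransform ℂ (LUC G) h).exists_extension hemb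
  obtain ⟨f, hf⟩ := (gelfandTransform_bijective (LUC G)).2 K
  refine ⟨f, (gelfandTransform_bijective (LUC G)).1 ?_⟩
  ext φ
  have e1 : gelfandTransform ℂ (LUC G) (arensFn z f) φ = rhoChar z hz φ f := rfl
  have e2 : rhoChar z hz φ f = K (rhoChar z hz φ) := by rw [← hf]; rfl
  have e3 : K (rhoChar z hz φ) = gelfandTransform ℂ (LUC G) h φ := by
    rw [← hK]; rfl
  rw [e1, e2, e3]

end LucPaper


open LucPaper Filter Topology
open scoped BoundedContinuousFunction

/-- If `z ∈ G^*` is right cancellable in `G^{luc}` and `(n_i)` is a norm-bounded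
net in `LUC(G)^*` with `n_i · z → n · z` weak-star, then `n_i → n` weak-star. -/
theorem wstar_tendsto_of_arens_right_cancellable
    {G : Type*} [Group G] [TopologicalSpace G] [IsTopologicalGroup G]
    [T2Space G] [LocallyCompactSpace G]
    (z : Ld G) (hz : z ∈ gStar G)
    (hrc : ∀ m n : Ld G, m ∈ gLuc G → n ∈ gLuc G → arens m z = arens n z → m = n)
    {ι : Type*} (l : Filter ι) (ns : ι → Ld G) (n : Ld G)
    (C : ℝ) (hb : ∀ i, ‖ns i‖ ≤ C)
    (hconv : ∀ f : LUC G, Tendsto (fun i => arens (ns i) z f) l (𝓝 (arens n z f))) :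
    ∀ f : LUC G, Tendsto (fun i => ns i f) l (𝓝 (n f)) := by
  intro f
  obtain ⟨f', hf'⟩ := arensFn_surjective z hz.1 hrc f
  have h1 := hconv f'
  simp only [arens_apply] at h1
  rw [show arensFn z f' = f from hf'] at h1
  exact h1
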